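/- Let X ⊆ ℙⁿ_K be a zero-dimensional locally Gorenstein scheme with trace map σ for Q^h(R_X)/K[x₀, x₀⁻¹], and Dedekind different δ^σ_X = (𝔠^σ_X)⁻¹ where 𝔠^σ_X ≅ ω_{R_X}(1). Then δ^σ_X is a homogeneous ideal of R_X containing x₀^{2r_X}, its Hilbert function satisfies HF_{δ^σ_X}(i) = 0 for i < 0, HF_{δ^σ_X}(i) = deg(X) for i ≥ 2r_X, is non-decreasing on [0, 2r_X], and consequently r_X ≤ ri(δ^σ_X) ≤ 2r_X. -/

import Mathlib

set_option synthInstance.maxHeartbeats 1000000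
set_option maxHeartbeats 1000000
set_option linter.unusedSectionVars false

/-- The degree-m homogeneous part of the homogeneous ring of quotients
Q = Q^h(R_X), modelled as the localization of R at the degree-1
non-zerodivisor x₀:  q is homogeneous of degree m iff x₀ⁿ·q comes from
R_{n+m} for some n. -/
def QPiece {K R Q : Type*} [Field K] [CommRing R] [Algebra K R]
    [CommRing Q] [Algebra R Q]
    (A : ℕ → Submodule K R) (x₀ : R) (m : ℤ) : Set Q :=
  {q | ∃ n k : ℕ, (k : ℤ) = (n : ℤ) + m ∧
        algebraMap R Q x₀ ^ n * q ∈ algebraMap R Q '' (A k : Set R)}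

/-- The polynomial subalgebra K[x₀] of Q. -/
def PolyPart (K : Type*) {R Q : Type*} [Field K] [CommRing R] [Algebra K R]
    [CommRing Q] [Algebra R Q] [Algebra K Q] (x₀ : R) : Subalgebra K Q :=
  Algebra.adjoin K {algebraMap R Q x₀}

/-- The Laurent subalgebra L₀ = K[x₀, x₀⁻¹] of Q. -/
noncomputable def LaurentPart (K : Type*) {R Q : Type*} [Field K] [CommRing R]
    [Algebra K R] [CommRing Q] [Algebra R Q] [Algebra K Q] (x₀ : R)
    [IsLocalization.Away x₀ Q] : Subalgebra K Q :=
  Algebra.adjoin K {algebraMap R Q x₀, IsLocalization.Away.invSelf x₀}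

/-- The Dedekind complementary module 𝔠^σ_X ⊆ Q^h(R_X): the image of
ω_{R_X}(1) = Hom_{K[x₀]}(R_X, K[x₀]) in Q under φ ↦ q where φ = q·σ, i.e.
the set of q ∈ Q such that the L₀-linear map (q·σ) maps R into K[x₀]. -/
def CompMod {K R Q : Type*} [Field K] [CommRing R] [Algebra K R]
    [CommRing Q] [Algebra R Q] [Algebra K Q] (x₀ : R) (s : Q →ₗ[K] Q) : Set Q :=
  {q | ∀ f : R, s (q * algebraMap R Q f) ∈ PolyPart K x₀ (Q := Q)}

/-- The Dedekind different δ^σ_X = (𝔠^σ_X)⁻¹ = {q ∈ Q | q·𝔠^σ_X ⊆ R_X}. -/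
def DedekindDiff {K R Q : Type*} [Field K] [CommRing R] [Algebra K R]
    [CommRing Q] [Algebra R Q] [Algebra K Q] (x₀ : R) (s : Q →ₗ[K] Q) : Set Q :=
  {q | ∀ c ∈ CompMod x₀ s, q * c ∈ Set.range (algebraMap R Q)}

/-- Hilbert function of the Dedekind different in degree i: the dimension of
its degree-i homogeneous piece (a K-subspace of Q, obtained via span). -/
noncomputable def HFdiff {K R Q : Type*} [Field K] [CommRing R] [Algebra K R]
    [CommRing Q] [Algebra R Q] [Algebra K Q]
    (A : ℕ → Submodule K R) (x₀ : R) (s : Q →ₗ[K] Q) (i : ℤ) : ℕ :=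
  Module.finrank K
    (Submodule.span K (DedekindDiff (K := K) (Q := Q) x₀ s ∩ QPiece (Q := Q) A x₀ i))

section DD

variable {K R Q : Type} [Field K] [CommRing R] [Algebra K R] [CommRing Q]
    [Algebra R Q] [Algebra K Q] [IsScalarTower K R Q]
    (A : ℕ → Submodule K R) [GradedAlgebra A]
    (x₀ : R)

lemma xmem : x₀ ∈ Submonoid.powers x₀ := ⟨1, pow_one x₀⟩

lemma hinj [IsLocalization.Away x₀ Q] (hnzd : ∀ a : R, x₀ * a = 0 → a = 0) :
    Function.Injective (algebraMap R Q) := by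
  refine IsLocalization.injective Q (M := Submonoid.powers x₀) ?_
  rintro y ⟨n, rfl⟩
  induction n with
  | zero => simpa using (1 : nonZeroDivisors R).2
  | succ n ih =>
      show x₀ ^ (n+1) ∈ nonZeroDivisors R
      rw [pow_succ]
      exact Submonoid.mul_mem _ ih (by
        rw [mem_nonZeroDivisors_iff_right]
        intro z hz
        exact hnzd z (by rwa [mul_comm] at hz))

noncomputable def uQ [IsLocalization.Away x₀ Q] : Qˣ :=
  (IsLocalization.map_units Q (⟨x₀, xmem x₀⟩ : Submonoid.powers x₀)).unit

variable [IsLocalization.Away x₀ Q]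

lemma uQ_val : ((uQ x₀ : Qˣ) : Q) = algebraMap R Q x₀ := rfl

lemma uQ_inv_val : (((uQ x₀ : Qˣ)⁻¹ : Qˣ) : Q) = IsLocalization.Away.invSelf (S := Q) x₀ := by
  have h : ((uQ x₀ : Qˣ) : Q) * IsLocalization.Away.invSelf (S := Q) x₀ = 1 := by
    rw [uQ_val]; exact IsLocalization.Away.mul_invSelf x₀
  exact Units.inv_eq_of_mul_eq_one_right h

lemma uQ_zpow_val (n : ℕ) : (((uQ x₀ : Qˣ) ^ (n : ℤ) : Qˣ) : Q) = algebraMap R Q (x₀ ^ n) := by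
  rw [zpow_natCast, Units.val_pow_eq_pow_val, uQ_val, map_pow]

end DD

section DD2

variable {K R Q : Type} [Field K] [CommRing R] [Algebra K R] [CommRing Q]
    [Algebra R Q] [Algebra K Q] [IsScalarTower K R Q]
    (A : ℕ → Submodule K R) [GradedAlgebra A]
    (x₀ : R) [IsLocalization.Away x₀ Q] (rX : ℕ)

lemma xpow_mem (hx₀ : x₀ ∈ A 1) (j : ℕ) : x₀ ^ j ∈ A j := by
  simpa using SetLike.pow_mem_graded j hx₀

lemma QP_phi {k : ℕ} {a : R} (ha : a ∈ A k) :
    algebraMap R Q a ∈ QPiece (Q := Q) A x₀ (k : ℤ) :=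
  ⟨0, k, by simp, a, ha, by simp⟩

lemma exists_rep (hx₀ : x₀ ∈ A 1) {m : ℤ} {q : Q} (hq : q ∈ QPiece (Q := Q) A x₀ m)
    (N : ℕ) : ∃ n ≥ N, ∃ k, ∃ g : R, g ∈ A k ∧ (k : ℤ) = (n : ℤ) + m ∧
      algebraMap R Q x₀ ^ n * q = algebraMap R Q g := by
  obtain ⟨n, k, hk, g, hg, hgq⟩ := hq
  refine ⟨n + (N - n), by omega, (N - n) + k, x₀ ^ (N - n) * g, ?_, by omega, ?_⟩
  · exact SetLike.mul_mem_graded (xpow_mem A x₀ hx₀ _) hg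
  · rw [pow_add, mul_comm (algebraMap R Q x₀ ^ n), mul_assoc, map_mul, map_pow, hgq]

lemma stab' (hstab : ∀ i ≥ rX, ∀ a ∈ A (i + 1), ∃ b ∈ A i, a = x₀ * b)
    (j : ℕ) : ∀ a ∈ A (rX + j), ∃ b ∈ A rX, a = x₀ ^ j * b := by
  induction j with
  | zero => exact fun a ha => ⟨a, ha, by simp⟩
  | succ j ih =>
      intro a ha
      obtain ⟨a', ha', haa⟩ := hstab (rX + j) (by omega) a ha
      obtain ⟨b, hb, hab⟩ := ih a' ha'
      exact ⟨b, hb, by rw [haa, hab, pow_succ, mul_comm (x₀ ^ j) x₀, mul_assoc]⟩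

noncomputable def iot (m : ℤ) : (A rX) →ₗ[K] Q :=
  (LinearMap.mulLeft K ((((uQ x₀ : Qˣ) ^ (m - rX) : Qˣ)) : Q)).comp
    (((Algebra.linearMap R Q).restrictScalars K).comp (A rX).subtype)

lemma iot_apply (m : ℤ) (a : A rX) :
    iot (Q := Q) A x₀ rX m a
      = (((uQ x₀ : Qˣ) ^ (m - rX) : Qˣ) : Q) * algebraMap R Q (a : R) := rfl

lemma uQ_zpow_val' {j : ℤ} (h : 0 ≤ j) :
    (((uQ x₀ : Qˣ) ^ j : Qˣ) : Q) = algebraMap R Q (x₀ ^ j.toNat) := by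
  rw [← uQ_zpow_val (Q := Q) x₀ j.toNat]
  congr 1
  rw [Int.toNat_of_nonneg h]

lemma uQ_pow_val (n : ℕ) :
    (((uQ x₀ : Qˣ) ^ n : Qˣ) : Q) = algebraMap R Q x₀ ^ n := by
  rw [Units.val_pow_eq_pow_val, uQ_val]

lemma QP_eq_range (hx₀ : x₀ ∈ A 1)
    (hstab : ∀ i ≥ rX, ∀ a ∈ A (i + 1), ∃ b ∈ A i, a = x₀ * b) (m : ℤ) :
    QPiece (Q := Q) A x₀ m = Set.range (iot (Q := Q) A x₀ rX m) := by
  ext q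
  constructor
  · intro hq
    obtain ⟨n, hn, k, g, hg, hk, hgq⟩ := exists_rep A x₀ hx₀ hq (rX - m).toNat
    have hrk : rX ≤ k := by omega
    obtain ⟨b, hb, hbg⟩ := stab' A x₀ rX hstab (k - rX) g (by rwa [Nat.add_sub_cancel' hrk])
    refine ⟨⟨b, hb⟩, ?_⟩
    rw [iot_apply]
    have hq' : q = (((uQ x₀ : Qˣ) ^ n : Qˣ)⁻¹ : Qˣ) * algebraMap R Q g := by
      rw [Units.eq_inv_mul_iff_mul_eq, uQ_pow_val]
      exact hgq
    rw [hq', hbg, map_mul, ← mul_assoc]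
    congr 1
    rw [map_pow, ← uQ_pow_val (Q := Q) x₀ (k - rX), ← Units.val_mul]
    congr 1
    rw [← zpow_natCast (uQ x₀ : Qˣ) n, ← zpow_neg, ← zpow_natCast (uQ x₀ : Qˣ) (k - rX),
      ← zpow_add]
    congr 1
    omega
  · rintro ⟨b, rfl⟩
    rw [iot_apply]
    set n : ℕ := (rX - m).toNat with hn
    have h1 : (0:ℤ) ≤ n + m - rX := by omega
    refine ⟨n, ((n + m - rX).toNat + rX), by omega, x₀ ^ ((n:ℤ) + m - rX).toNat * (b : R),
      SetLike.mul_mem_graded (xpow_mem A x₀ hx₀ _) b.2, ?_⟩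
    rw [map_mul, ← uQ_zpow_val' (Q := Q) x₀ h1, ← mul_assoc, ← uQ_pow_val (Q := Q) x₀ n,
      ← Units.val_mul, ← zpow_natCast (uQ x₀ : Qˣ) n, ← zpow_add,
      show (↑n:ℤ) + (m - ↑rX) = ↑n + m - ↑rX from by ring]

end DD2

section DD3

variable {K R Q : Type} [Field K] [CommRing R] [Algebra K R] [CommRing Q]
    [Algebra R Q] [Algebra K Q] [IsScalarTower K R Q]
    (A : ℕ → Submodule K R) [GradedAlgebra A]
    (x₀ : R) [IsLocalization.Away x₀ Q] (rX : ℕ)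

lemma QP_zero (m : ℤ) : (0 : Q) ∈ QPiece (Q := Q) A x₀ m := by
  refine ⟨m.natAbs, (m.natAbs + m).toNat, by omega, 0, (A _).zero_mem, by simp⟩

lemma uQ_zpow_QP (hx₀ : x₀ ∈ A 1) (j : ℤ) :
    (((uQ x₀ : Qˣ) ^ j : Qˣ) : Q) ∈ QPiece (Q := Q) A x₀ j := by
  set n : ℕ := (-j).toNat with hn
  have h1 : (0:ℤ) ≤ (n:ℤ) + j := by omega
  refine ⟨n, ((n:ℤ) + j).toNat, by omega, x₀ ^ ((n:ℤ) + j).toNat,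
    xpow_mem A x₀ hx₀ _, ?_⟩
  rw [← uQ_zpow_val' (Q := Q) x₀ h1, ← uQ_pow_val (Q := Q) x₀ n, ← Units.val_mul,
    ← zpow_natCast (uQ x₀ : Qˣ) n, ← zpow_add]

lemma exists_rep_exact (hx₀ : x₀ ∈ A 1) {m : ℤ} {q : Q}
    (hq : q ∈ QPiece (Q := Q) A x₀ m) :
    ∃ n₀ : ℕ, ∀ n ≥ n₀, ∃ k, ∃ g : R, g ∈ A k ∧ (k : ℤ) = (n : ℤ) + m ∧
      algebraMap R Q x₀ ^ n * q = algebraMap R Q g := by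
  obtain ⟨n₀, k₀, hk, g, hg, hgq⟩ := hq
  refine ⟨n₀, fun n hn => ⟨(n - n₀) + k₀, x₀ ^ (n - n₀) * g,
    SetLike.mul_mem_graded (xpow_mem A x₀ hx₀ _) hg, by omega, ?_⟩⟩
  have hn' : n - n₀ + n₀ = n := by omega
  calc algebraMap R Q x₀ ^ n * q
      = algebraMap R Q x₀ ^ (n - n₀) * (algebraMap R Q x₀ ^ n₀ * q) := by
        rw [← mul_assoc, ← pow_add, hn']
    _ = algebraMap R Q (x₀ ^ (n - n₀) * g) := by rw [← hgq, map_mul, map_pow]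

lemma QP_mul (hx₀ : x₀ ∈ A 1) {m m' : ℤ} {q q' : Q}
    (hq : q ∈ QPiece (Q := Q) A x₀ m) (hq' : q' ∈ QPiece (Q := Q) A x₀ m') :
    q * q' ∈ QPiece (Q := Q) A x₀ (m + m') := by
  obtain ⟨n, k, hk, g, hg, hgq⟩ := hq
  obtain ⟨n', k', hk', g', hg', hgq'⟩ := hq'
  refine ⟨n + n', k + k', by push_cast; omega, g * g',
    SetLike.mul_mem_graded hg hg', ?_⟩
  rw [map_mul, hgq, hgq', pow_add]; ring

lemma iot_shift (j m : ℤ) (a : A rX) :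
    (((uQ x₀ : Qˣ) ^ j : Qˣ) : Q) * iot (Q := Q) A x₀ rX m a
      = iot (Q := Q) A x₀ rX (m + j) a := by
  rw [iot_apply, iot_apply, ← mul_assoc, ← Units.val_mul, ← zpow_add]
  congr 3
  ring

lemma iot_inj (hnzd : ∀ a : R, x₀ * a = 0 → a = 0) (m : ℤ) :
    Function.Injective (iot (Q := Q) A x₀ rX m) := by
  intro a a' h
  rw [iot_apply, iot_apply] at h
  have h2 := (Units.mul_right_inj (a := (uQ x₀ : Qˣ) ^ (m - rX))).mp h
  exact Subtype.ext (hinj (Q := Q) x₀ hnzd h2)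

lemma sum_distinct {ι : Type} (S : Finset ι) (d : ι → ℕ)
    (hd : ∀ p ∈ S, ∀ p' ∈ S, d p = d p' → p = p') (w : ι → R)
    (hw : ∀ p ∈ S, w p ∈ A (d p)) (hsum : ∑ p ∈ S, w p = 0) :
    ∀ p ∈ S, w p = 0 := by
  intro p₀ hp₀
  have h0 : ((DirectSum.decompose A (∑ p ∈ S, w p) (d p₀) : A (d p₀)) : R) = 0 := by
    rw [hsum]; simp
  rw [DirectSum.decompose_sum] at h0
  rw [DFinsupp.finset_sum_apply] at h0
  rw [AddSubmonoidClass.coe_finset_sum] at h0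
  rw [Finset.sum_eq_single p₀] at h0
  · rwa [DirectSum.decompose_of_mem_same A (hw p₀ hp₀)] at h0
  · intro p hp hne
    exact DirectSum.decompose_of_mem_ne A (hw p hp) (fun h => hne (hd p hp p₀ hp₀ h))
  · intro h; exact absurd hp₀ h

lemma QP_direct (hx₀ : x₀ ∈ A 1) (hnzd : ∀ a : R, x₀ * a = 0 → a = 0)
    (S : Finset ℤ) (v : ℤ → Q) (hv : ∀ j ∈ S, v j ∈ QPiece (Q := Q) A x₀ j)
    (hsum : ∑ j ∈ S, v j = 0) : ∀ j ∈ S, v j = 0 := by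
  classical
  set v' : ℤ → Q := fun j => if j ∈ S then v j else 0 with hv'
  have hv'mem : ∀ j : ℤ, v' j ∈ QPiece (Q := Q) A x₀ j := by
    intro j
    by_cases h : j ∈ S
    · simpa [hv', h] using hv j h
    · simpa [hv', h] using QP_zero (Q := Q) A x₀ j
  choose n₀ hrep using fun j => exists_rep_exact A x₀ hx₀ (hv'mem j)
  set N : ℕ := S.sup n₀ with hN
  have hrepN : ∀ j ∈ S, ∃ k, ∃ g : R, g ∈ A k ∧ (k : ℤ) = (N : ℤ) + j ∧
      algebraMap R Q x₀ ^ N * v j = algebraMap R Q g := by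
    intro j hj
    obtain ⟨k, g, hg, hk, he⟩ := hrep j N (Finset.le_sup hj)
    exact ⟨k, g, hg, hk, by simpa [hv', hj] using he⟩
  choose! k g hg hk he using hrepN
  have hR : ∑ j ∈ S, g j = 0 := by
    apply hinj (Q := Q) x₀ hnzd
    rw [map_sum, map_zero]
    rw [← Finset.sum_congr rfl (fun j hj => he j hj)]
    rw [← Finset.mul_sum, hsum, mul_zero]
  have hz := sum_distinct A S k
    (fun p hp p' hp' hh => by
      have h1 := hk p hp; have h2 := hk p' hp'; rw [hh] at h1; omega) g
    (fun p hp => hg p hp) hR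
  intro j hj
  have : algebraMap R Q x₀ ^ N * v j = 0 := by rw [he j hj, hz j hj, map_zero]
  have hunit : IsUnit (algebraMap R Q x₀ ^ N) := (IsLocalization.map_units Q
    (⟨x₀, xmem x₀⟩ : Submonoid.powers x₀)).pow N
  exact (hunit.mul_right_eq_zero).mp this

end DD3

section DD4

variable {K R Q : Type} [Field K] [CommRing R] [Algebra K R] [CommRing Q]
    [Algebra R Q] [Algebra K Q] [IsScalarTower K R Q]
    (A : ℕ → Submodule K R) [GradedAlgebra A]
    (x₀ : R) [IsLocalization.Away x₀ Q] (rX : ℕ)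

lemma uQ_zpow_mem_L (j : ℤ) :
    (((uQ x₀ : Qˣ) ^ j : Qˣ) : Q) ∈ LaurentPart K x₀ (Q := Q) := by
  have ht : algebraMap R Q x₀ ∈ LaurentPart K x₀ (Q := Q) :=
    Algebra.subset_adjoin (by simp)
  have hs : IsLocalization.Away.invSelf (S := Q) x₀ ∈ LaurentPart K x₀ (Q := Q) :=
    Algebra.subset_adjoin (by simp)
  rcases j with n | n
  · rw [Int.ofNat_eq_coe, zpow_natCast, Units.val_pow_eq_pow_val, uQ_val]
    exact pow_mem ht n
  · rw [Int.negSucc_eq, zpow_neg, show ((n:ℤ)+1) = ((n+1 : ℕ):ℤ) by push_cast; ring,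
      zpow_natCast, ← inv_pow, Units.val_pow_eq_pow_val, uQ_inv_val]
    exact pow_mem hs (n + 1)

lemma L_span (a : Q) (ha : a ∈ LaurentPart K x₀ (Q := Q)) :
    a ∈ Submodule.span K (Set.range fun j : ℤ => (((uQ x₀ : Qˣ) ^ j : Qˣ) : Q)) := by
  set W := Submodule.span K (Set.range fun j : ℤ => (((uQ x₀ : Qˣ) ^ j : Qˣ) : Q)) with hW
  induction ha using Algebra.adjoin_induction with
  | mem x hx =>
      rcases hx with rfl | hx
      · exact Submodule.subset_span ⟨1, by beta_reduce; rw [zpow_one, uQ_val]⟩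
      · rw [Set.mem_singleton_iff] at hx
        subst hx
        exact Submodule.subset_span ⟨-1, by beta_reduce; rw [zpow_neg, zpow_one, uQ_inv_val]⟩
  | algebraMap r =>
      have : algebraMap K Q r = r • (((uQ x₀ : Qˣ) ^ (0:ℤ) : Qˣ) : Q) := by
        rw [zpow_zero, Units.val_one, Algebra.algebraMap_eq_smul_one]
      rw [this]
      exact Submodule.smul_mem _ _ (Submodule.subset_span ⟨0, rfl⟩)
  | add x y hx hy hx' hy' => exact Submodule.add_mem _ hx' hy'
  | mul x y hx hy hx' hy' =>
      have hle : W * W ≤ W := by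
        rw [hW, Submodule.span_mul_span]
        apply Submodule.span_le.mpr
        rintro z ⟨z1, ⟨j1, rfl⟩, z2, ⟨j2, rfl⟩, rfl⟩
        exact Submodule.subset_span ⟨j1 + j2, by beta_reduce; rw [zpow_add, Units.val_mul]⟩
      exact hle (Submodule.mul_mem_mul hx' hy')

lemma P_span (a : Q) (ha : a ∈ PolyPart K x₀ (Q := Q)) :
    a ∈ Submodule.span K (Set.range fun n : ℕ => (((uQ x₀ : Qˣ) ^ (n:ℤ) : Qˣ) : Q)) := by
  set W := Submodule.span K (Set.range fun n : ℕ => (((uQ x₀ : Qˣ) ^ (n:ℤ) : Qˣ) : Q)) with hW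
  induction ha using Algebra.adjoin_induction with
  | mem x hx =>
      rw [Set.mem_singleton_iff] at hx
      subst hx
      exact Submodule.subset_span ⟨1, by beta_reduce; rw [Nat.cast_one, zpow_one, uQ_val]⟩
  | algebraMap r =>
      have : algebraMap K Q r = r • (((uQ x₀ : Qˣ) ^ ((0:ℕ):ℤ) : Qˣ) : Q) := by
        rw [Nat.cast_zero, zpow_zero, Units.val_one, Algebra.algebraMap_eq_smul_one]
      rw [this]
      exact Submodule.smul_mem _ _ (Submodule.subset_span ⟨0, rfl⟩)
  | add x y hx hy hx' hy' => exact Submodule.add_mem _ hx' hy'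
  | mul x y hx hy hx' hy' =>
      have hle : W * W ≤ W := by
        rw [hW, Submodule.span_mul_span]
        apply Submodule.span_le.mpr
        rintro z ⟨z1, ⟨j1, rfl⟩, z2, ⟨j2, rfl⟩, rfl⟩
        exact Submodule.subset_span ⟨j1 + j2, by
          beta_reduce; rw [Nat.cast_add, zpow_add, Units.val_mul]⟩
      exact hle (Submodule.mul_mem_mul hx' hy')

lemma smul_upow_mem_P {j : ℤ} (hj : 0 ≤ j) (c : K) :
    c • (((uQ x₀ : Qˣ) ^ j : Qˣ) : Q) ∈ PolyPart K x₀ (Q := Q) := by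
  have ht : algebraMap R Q x₀ ∈ PolyPart K x₀ (Q := Q) :=
    Algebra.subset_adjoin rfl
  refine Subalgebra.smul_mem _ ?_ c
  rw [uQ_zpow_val' (Q := Q) x₀ hj, map_pow]
  exact pow_mem ht _

end DD4

section DD5

variable {K R Q : Type} [Field K] [CommRing R] [Algebra K R] [CommRing Q]
    [Algebra R Q] [Algebra K Q] [IsScalarTower K R Q]
    (A : ℕ → Submodule K R) [GradedAlgebra A] [∀ i, FiniteDimensional K (A i)]
    (x₀ : R) [IsLocalization.Away x₀ Q] (rX D : ℕ)

lemma uQ_inv_pow_val (n : ℕ) :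
    (((uQ x₀ : Qˣ) ^ n : Qˣ)⁻¹ : Qˣ) = ((uQ x₀ : Qˣ) ^ (-(n:ℤ)) : Qˣ) := by
  rw [zpow_neg, zpow_natCast]

lemma master (hx₀ : x₀ ∈ A 1) (hnzd : ∀ a : R, x₀ * a = 0 → a = 0)
    (hDr : Module.finrank K (A rX) = D) (hDpos : 0 < D)
    (hstab : ∀ i ≥ rX, ∀ a ∈ A (i + 1), ∃ b ∈ A i, a = x₀ * b) :
    ∃ π : ℤ → (Q →ₗ[K] Q),
      (∀ (m : ℤ) (q : Q), q ∈ QPiece (Q := Q) A x₀ m → π m q = q) ∧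
      (∀ (m m' : ℤ) (q : Q), q ∈ QPiece (Q := Q) A x₀ m' → m ≠ m' → π m q = 0) ∧
      (∀ q : Q, ∃ S : Finset ℤ, q = ∑ m ∈ S, π m q) ∧
      (∀ (m : ℤ) (q : Q), π m q ∈ QPiece (Q := Q) A x₀ m) ∧
      (∀ σ : Q →ₗ[K] Q,
        (∀ ψ : Q →ₗ[K] Q, (∀ q, ψ q ∈ LaurentPart K x₀ (Q := Q)) →
          (∀ a ∈ LaurentPart K x₀ (Q := Q), ∀ q, ψ (a * q) = a * ψ q) →
          ∃ u : Q, ∀ q, ψ q = σ (u * q)) →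
        ∀ w : Q, (∀ q, σ (w * q) = 0) → w = 0) := by
  classical
  -- nontriviality of Q
  have hANT : Nontrivial (A rX) := by
    refine Module.finrank_pos_iff (R := K).mp ?_
    rw [hDr]; exact hDpos
  have hQNT : Nontrivial Q := by
    obtain ⟨a, ha⟩ := exists_ne (0 : A rX)
    refine ⟨algebraMap R Q (a : R), 0, fun h => ha ?_⟩
    refine Subtype.ext (hinj (Q := Q) x₀ hnzd ?_)
    simp [h]
  set b : Module.Basis (Fin D) K (A rX) :=
    (Module.finBasis K (A rX)).reindex (finCongr hDr) with hb
  set Bf : ℤ × Fin D → Q := fun p => iot (Q := Q) A x₀ rX p.1 (b p.2) with hBf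
  -- linear independence
  have hli : LinearIndependent K Bf := by
    rw [linearIndependent_iff']
    intro s gc hsum p hp
    have hfib := Finset.sum_fiberwise_of_maps_to
      (t := s.image Prod.fst)
      (fun p hp => Finset.mem_image_of_mem Prod.fst hp) (fun p => gc p • Bf p)
    have hweq : ∀ m : ℤ, (∑ p ∈ s.filter (fun p => p.1 = m), gc p • Bf p)
        = iot (Q := Q) A x₀ rX m (∑ p ∈ s.filter (fun p => p.1 = m), gc p • b p.2) := by
      intro m
      rw [show (iot (Q := Q) A x₀ rX m) (∑ p ∈ s.filter (fun p => p.1 = m), gc p • b p.2)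
          = ∑ p ∈ s.filter (fun p => p.1 = m), iot (Q := Q) A x₀ rX m (gc p • b p.2) from
          map_sum (iot (Q := Q) A x₀ rX m) (fun p => gc p • b p.2)
            (s.filter (fun p => p.1 = m))]
      refine Finset.sum_congr rfl fun p hp => ?_
      have hp1 : p.1 = m := (Finset.mem_filter.mp hp).2
      rw [map_smul, hBf]
      beta_reduce
      rw [hp1]
    have hdir := QP_direct A x₀ hx₀ hnzd (s.image Prod.fst)
      (fun m => iot (Q := Q) A x₀ rX m (∑ p ∈ s.filter (fun p => p.1 = m), gc p • b p.2))
      (fun m _ => by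
        rw [QP_eq_range (Q := Q) A x₀ rX hx₀ hstab]; exact ⟨_, rfl⟩)
      (by
        rw [← Finset.sum_congr rfl (fun m _ => hweq m), hfib, hsum])
    have h1 : ∑ p' ∈ s.filter (fun p' => p'.1 = p.1), gc p' • b p'.2 = 0 := by
      apply iot_inj (Q := Q) A x₀ rX hnzd p.1
      rw [map_zero]
      exact hdir p.1 (Finset.mem_image_of_mem Prod.fst hp)
    have hinj2 : ∀ p1 ∈ s.filter (fun p' => p'.1 = p.1), ∀ p2 ∈ s.filter (fun p' => p'.1 = p.1),
        p1.2 = p2.2 → p1 = p2 := by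
      intro p1 hp1 p2 hp2 h2
      have e1 : p1.1 = p.1 := (Finset.mem_filter.mp hp1).2
      have e2 : p2.1 = p.1 := (Finset.mem_filter.mp hp2).2
      exact Prod.ext (by rw [e1, e2]) h2
    have h2 := linearIndependent_iff'.mp b.linearIndependent
      ((s.filter (fun p' => p'.1 = p.1)).image Prod.snd) (fun i => gc (p.1, i)) ?_ p.2 ?_
    · have : (p.1, p.2) = p := rfl
      rwa [this] at h2
    · rw [Finset.sum_image hinj2, ← h1]
      refine Finset.sum_congr rfl fun p' hp' => ?_
      have e1 : p'.1 = p.1 := (Finset.mem_filter.mp hp').2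
      rw [← e1]
    · exact Finset.mem_image_of_mem Prod.snd (Finset.mem_filter.mpr ⟨hp, rfl⟩)
  -- spanning
  have hsp : ⊤ ≤ Submodule.span K (Set.range Bf) := by
    intro q _
    obtain ⟨⟨gn, xm⟩, hsurj⟩ := IsLocalization.surj (M := Submonoid.powers x₀) q
    obtain ⟨n, hn⟩ := xm.2
    have hxm : (xm : R) = x₀ ^ n := by simpa using hn.symm
    have hsurj' : q * algebraMap R Q x₀ ^ n = algebraMap R Q gn := by
      rw [← map_pow, ← hxm]
      exact hsurj
    have hqe : q = ((((uQ x₀ : Qˣ) ^ n)⁻¹ : Qˣ) : Q) * algebraMap R Q gn := by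
      rw [Units.eq_inv_mul_iff_mul_eq, uQ_pow_val, mul_comm]
      exact hsurj'
    have hterm : ∀ (kk : ℕ) (a : R), a ∈ A kk →
        ((((uQ x₀ : Qˣ) ^ n)⁻¹ : Qˣ) : Q) * algebraMap R Q a
          ∈ Submodule.span K (Set.range Bf) := by
      intro kk a ha
      have h1 : algebraMap R Q a ∈ QPiece (Q := Q) A x₀ kk := QP_phi A x₀ ha
      rw [QP_eq_range (Q := Q) A x₀ rX hx₀ hstab] at h1
      obtain ⟨aa, haa⟩ := h1
      have h2 : ((((uQ x₀ : Qˣ) ^ n)⁻¹ : Qˣ) : Q) * algebraMap R Q a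
          = iot (Q := Q) A x₀ rX ((kk:ℤ) + (-(n:ℤ))) aa := by
        rw [← haa, ← iot_shift, uQ_inv_pow_val]
      rw [h2, ← Module.Basis.sum_repr b aa, map_sum]
      apply Submodule.sum_mem
      intro i _
      rw [map_smul]
      exact Submodule.smul_mem _ _ (Submodule.subset_span ⟨((kk:ℤ) + (-(n:ℤ)), i), rfl⟩)
    have hgdec := DirectSum.sum_support_decompose A gn
    have hq2 : q = ∑ kk ∈ DFinsupp.support (DirectSum.decompose A gn),
        ((((uQ x₀ : Qˣ) ^ n)⁻¹ : Qˣ) : Q) * algebraMap R Q ((DirectSum.decompose A gn) kk : R) := by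
      rw [← Finset.mul_sum, ← map_sum]
      rw [hgdec, ← hqe]
    rw [hq2]
    exact Submodule.sum_mem _ fun kk _ => hterm kk _ (SetLike.coe_mem _)
  set Bb : Module.Basis (ℤ × Fin D) K Q := Module.Basis.mk hli hsp with hBb
  have hBbe : ∀ p, Bb p = Bf p := fun p => Module.Basis.mk_apply hli hsp p
  -- projections
  set π : ℤ → (Q →ₗ[K] Q) := fun m =>
    ∑ i : Fin D, (Bb.coord (m, i)).smulRight (Bf (m, i)) with hπ
  have hπ_apply : ∀ (m : ℤ) (q : Q),
      π m q = ∑ i : Fin D, Bb.repr q (m, i) • Bf (m, i) := by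
    intro m q
    rw [hπ]
    beta_reduce
    rw [LinearMap.sum_apply]
    exact Finset.sum_congr rfl fun i _ => rfl
  have hiotB : ∀ (m : ℤ) (a : A rX),
      iot (Q := Q) A x₀ rX m a = ∑ i : Fin D, b.repr a i • Bb (m, i) := by
    intro m a
    conv_lhs => rw [← Module.Basis.sum_repr b a]
    rw [map_sum]
    refine Finset.sum_congr rfl fun i _ => ?_
    rw [map_smul, hBbe]
  have hrep : ∀ (m : ℤ) (a : A rX),
      Bb.repr (iot (Q := Q) A x₀ rX m a)
        = ∑ i : Fin D, b.repr a i • Finsupp.single (m, i) (1:K) := by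
    intro m a
    rw [hiotB, map_sum]
    refine Finset.sum_congr rfl fun i _ => ?_
    rw [map_smul, Module.Basis.repr_self]
  have hπι : ∀ (m m' : ℤ) (a : A rX),
      π m' (iot (Q := Q) A x₀ rX m a) = if m' = m then iot (Q := Q) A x₀ rX m a else 0 := by
    intro m m' a
    rw [hπ_apply, hrep]
    by_cases h : m' = m
    · subst h
      rw [if_pos rfl, hiotB]
      refine Finset.sum_congr rfl fun i _ => ?_
      rw [Finsupp.finset_sum_apply]
      have : ∀ j : Fin D, (b.repr a j • Finsupp.single ((m' : ℤ), j) (1:K)) (m', i)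
          = if j = i then b.repr a j else 0 := by
        intro j
        rw [Finsupp.smul_apply, Finsupp.single_apply]
        by_cases hj : j = i
        · subst hj; simp
        · rw [if_neg (by simp [hj]), if_neg hj, smul_zero]
      rw [Finset.sum_congr rfl fun j _ => this j, Finset.sum_ite_eq' Finset.univ i
        (fun j => b.repr a j), if_pos (Finset.mem_univ i), hBbe]
    · rw [if_neg h]
      refine Finset.sum_eq_zero fun i _ => ?_
      rw [Finsupp.finset_sum_apply]
      have : ∀ j : Fin D, (b.repr a j • Finsupp.single ((m : ℤ), j) (1:K)) (m', i) = 0 := by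
        intro j
        rw [Finsupp.smul_apply, Finsupp.single_apply, if_neg (by simp [h, Ne.symm h]), smul_zero]
      rw [Finset.sum_congr rfl fun j _ => this j, Finset.sum_const_zero, zero_smul]
  have hπ1 : ∀ (m : ℤ) (q : Q), q ∈ QPiece (Q := Q) A x₀ m → π m q = q := by
    intro m q hq
    rw [QP_eq_range (Q := Q) A x₀ rX hx₀ hstab] at hq
    obtain ⟨a, rfl⟩ := hq
    rw [hπι, if_pos rfl]
  have hπ2 : ∀ (m m' : ℤ) (q : Q), q ∈ QPiece (Q := Q) A x₀ m' → m ≠ m' → π m q = 0 := by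
    intro m m' q hq hne
    rw [QP_eq_range (Q := Q) A x₀ rX hx₀ hstab] at hq
    obtain ⟨a, rfl⟩ := hq
    rw [hπι, if_neg hne]
  have hπ4 : ∀ (m : ℤ) (q : Q), π m q ∈ QPiece (Q := Q) A x₀ m := by
    intro m q
    rw [QP_eq_range (Q := Q) A x₀ rX hx₀ hstab]
    refine ⟨∑ i : Fin D, Bb.repr q (m, i) • b i, ?_⟩
    rw [map_sum, hπ_apply]
    refine (Finset.sum_congr rfl fun i _ => ?_).symm
    rw [map_smul]
  have hπ3 : ∀ q : Q, ∃ S : Finset ℤ, q = ∑ m ∈ S, π m q := by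
    intro q
    refine ⟨(Bb.repr q).support.image Prod.fst, ?_⟩
    have e1 : ∑ m ∈ (Bb.repr q).support.image Prod.fst, π m q
        = ∑ p ∈ ((Bb.repr q).support.image Prod.fst) ×ˢ (Finset.univ : Finset (Fin D)),
            Bb.repr q p • Bf p := by
      rw [Finset.sum_product]
      exact Finset.sum_congr rfl fun m _ => hπ_apply m q
    have hsub : (Bb.repr q).support ⊆ ((Bb.repr q).support.image Prod.fst) ×ˢ Finset.univ := by
      intro p hp
      rw [Finset.mem_product]
      exact ⟨Finset.mem_image_of_mem Prod.fst hp, Finset.mem_univ _⟩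
    have e2 : ∑ p ∈ (Bb.repr q).support, Bb.repr q p • Bf p
        = ∑ p ∈ ((Bb.repr q).support.image Prod.fst) ×ˢ Finset.univ, Bb.repr q p • Bf p := by
      refine Finset.sum_subset hsub fun p _ hp => ?_
      rw [Finsupp.notMem_support_iff.mp hp, zero_smul]
    have e3 : q = ∑ p ∈ (Bb.repr q).support, Bb.repr q p • Bf p := by
      conv_lhs => rw [← Module.Basis.linearCombination_repr Bb q]
      rw [Finsupp.linearCombination_apply]
      have : (Bb.repr q).sum (fun p c => c • Bb p)
          = ∑ p ∈ (Bb.repr q).support, Bb.repr q p • Bb p := rfl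
      rw [this]
      exact Finset.sum_congr rfl fun p _ => by rw [hBbe]
    rw [e1, ← e2, ← e3]
  refine ⟨π, hπ1, hπ2, hπ3, hπ4, ?_⟩
  -- nondegeneracy
  intro σ htr w hw
  by_contra hw0
  have hr : Bb.repr w ≠ 0 := fun h => hw0 (by
    have := congrArg (Bb.repr.symm) h
    rwa [LinearEquiv.symm_apply_apply, map_zero] at this)
  obtain ⟨p₀, hp₀⟩ : ∃ p, Bb.repr w p ≠ 0 := by
    by_contra h
    push_neg at h
    exact hr (Finsupp.ext h)
  set gfun : ℤ × Fin D → Q := fun p =>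
    if p.2 = p₀.2 then (((uQ x₀ : Qˣ) ^ p.1 : Qˣ) : Q) else 0 with hgfun
  set ψ : Q →ₗ[K] Q :=
    (Finsupp.linearCombination K gfun).comp (Bb.repr.toLinearMap) with hψ
  have hψap : ∀ q : Q, ψ q = ∑ p ∈ (Bb.repr q).support, Bb.repr q p • gfun p := by
    intro q
    rw [hψ, LinearMap.comp_apply, LinearEquiv.coe_toLinearMap,
      Finsupp.linearCombination_apply]
    rfl
  have hψBb : ∀ p, ψ (Bb p) = gfun p := by
    intro p
    rw [hψ, LinearMap.comp_apply, LinearEquiv.coe_toLinearMap, Module.Basis.repr_self,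
      Finsupp.linearCombination_single, one_smul]
  have hψL : ∀ q, ψ q ∈ LaurentPart K x₀ (Q := Q) := by
    intro q
    rw [hψap]
    refine Subalgebra.sum_mem _ fun p _ => ?_
    rw [hgfun]
    beta_reduce
    by_cases h : p.2 = p₀.2
    · rw [if_pos h]
      exact Subalgebra.smul_mem _ (uQ_zpow_mem_L x₀ p.1) _
    · rw [if_neg h, smul_zero]
      exact Subalgebra.zero_mem _
  have hgshift : ∀ (j : ℤ) (p : ℤ × Fin D),
      (((uQ x₀ : Qˣ) ^ j : Qˣ) : Q) * Bb p = Bb (p.1 + j, p.2) := by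
    intro j p
    rw [hBbe, hBbe, hBf]
    beta_reduce
    exact iot_shift A x₀ rX j p.1 (b p.2)
  have hgval : ∀ (j : ℤ) (p : ℤ × Fin D),
      gfun (p.1 + j, p.2) = (((uQ x₀ : Qˣ) ^ j : Qˣ) : Q) * gfun p := by
    intro j p
    rw [hgfun]
    beta_reduce
    by_cases h : p.2 = p₀.2
    · rw [if_pos h, if_pos h, ← Units.val_mul, ← zpow_add, add_comm]
    · rw [if_neg h, if_neg h, mul_zero]
  have hψmul : ∀ (j : ℤ) (q : Q),
      ψ ((((uQ x₀ : Qˣ) ^ j : Qˣ) : Q) * q) = (((uQ x₀ : Qˣ) ^ j : Qˣ) : Q) * ψ q := by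
    intro j
    have : ψ.comp (LinearMap.mulLeft K (((uQ x₀ : Qˣ) ^ j : Qˣ) : Q))
        = (LinearMap.mulLeft K (((uQ x₀ : Qˣ) ^ j : Qˣ) : Q)).comp ψ := by
      refine Module.Basis.ext Bb fun p => ?_
      simp only [LinearMap.comp_apply, LinearMap.mulLeft_apply]
      rw [hgshift, hψBb, hψBb, hgval]
    intro q
    have := LinearMap.congr_fun this q
    simpa only [LinearMap.comp_apply, LinearMap.mulLeft_apply] using this
  have hψlin : ∀ a ∈ LaurentPart K x₀ (Q := Q), ∀ q, ψ (a * q) = a * ψ q := by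
    intro a ha
    induction ha using Algebra.adjoin_induction with
    | mem x hx =>
        rcases hx with rfl | hx
        · intro q
          have := hψmul 1 q
          rwa [zpow_one, uQ_val] at this
        · rw [Set.mem_singleton_iff] at hx
          subst hx
          intro q
          have := hψmul (-1) q
          rwa [zpow_neg, zpow_one, uQ_inv_val] at this
    | algebraMap r =>
        intro q
        rw [← Algebra.smul_def, map_smul, Algebra.smul_def]
    | add x y hx hy hx' hy' =>
        intro q
        rw [add_mul, map_add, hx' q, hy' q, add_mul]
    | mul x y hx hy hx' hy' =>
        intro q
        rw [mul_assoc, hx' (y * q), hy' q, mul_assoc]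
  obtain ⟨u', hu'⟩ := htr ψ hψL hψlin
  have hψw : ψ w = 0 := by
    rw [hu' w, mul_comm]
    exact hw u'
  have hgp0 : gfun p₀ = (((uQ x₀ : Qˣ) ^ p₀.1 : Qˣ) : Q) := by
    rw [hgfun]
    beta_reduce
    rw [if_pos rfl]
  have hterm0 : ∀ p ∈ (Bb.repr w).support, p ≠ p₀ →
      π p₀.1 (Bb.repr w p • gfun p) = 0 := by
    intro p hp hne
    rw [map_smul]
    by_cases h : p.2 = p₀.2
    · have h1 : p.1 ≠ p₀.1 := fun hh => hne (Prod.ext hh h)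
      have hg : gfun p = (((uQ x₀ : Qˣ) ^ p.1 : Qˣ) : Q) := by
        rw [hgfun]; beta_reduce; rw [if_pos h]
      rw [hg, hπ2 p₀.1 p.1 _ (uQ_zpow_QP A x₀ hx₀ p.1) (Ne.symm h1), smul_zero]
    · have hg : gfun p = 0 := by rw [hgfun]; beta_reduce; rw [if_neg h]
      rw [hg, map_zero, smul_zero]
  have hmem0 : gfun p₀ ∈ QPiece (Q := Q) A x₀ p₀.1 := by
    rw [hgp0]; exact uQ_zpow_QP A x₀ hx₀ p₀.1
  have hcontr : π p₀.1 (ψ w) = Bb.repr w p₀ • (((uQ x₀ : Qˣ) ^ p₀.1 : Qˣ) : Q) := by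
    rw [hψap, map_sum, Finset.sum_eq_single p₀ hterm0
      (fun h => absurd (Finsupp.mem_support_iff.mpr hp₀) h), map_smul,
      hπ1 p₀.1 _ hmem0, hgp0]
  rw [hψw, map_zero] at hcontr
  rcases smul_eq_zero.mp hcontr.symm with h | h
  · exact hp₀ h
  · exact Units.ne_zero _ h

end DD5

/- STATEMENT 15: X ⊆ ℙⁿ_K a zero-dimensional locally Gorenstein scheme
(coordinate ring R = R_X, grading A, deg X = D, regularity index rX, x₀ a
degree-1 non-zerodivisor), σ a trace map for Q^h(R_X)/K[x₀,x₀⁻¹], and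
δ^σ_X = (𝔠^σ_X)⁻¹ the Dedekind different.  Then δ^σ_X is a homogeneous ideal
of R_X containing x₀^{2rX}; its Hilbert function vanishes in negative degrees,
equals deg(X) from degree 2rX on, is non-decreasing, and consequently
rX ≤ ri(δ^σ_X) ≤ 2rX. -/
theorem dedekindDifferent_basic_properties
    (K R Q : Type) [Field K] [CommRing R] [Algebra K R] [CommRing Q]
    [Algebra R Q] [Algebra K Q] [IsScalarTower K R Q]
    (A : ℕ → Submodule K R) [GradedAlgebra A]
    [∀ i, FiniteDimensional K (A i)]
    (x₀ : R) (hx₀ : x₀ ∈ A 1)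
    (hnzd : ∀ a : R, x₀ * a = 0 → a = 0)
    [IsLocalization.Away x₀ Q]
    (D rX : ℕ) (hDpos : 0 < D)
    (hD : ∀ i ≥ rX, Module.finrank K (A i) = D)
    (hstrict : ∀ i < rX, Module.finrank K (A i) < D)
    (hmono : ∀ i : ℕ, Module.finrank K (A i) ≤ Module.finrank K (A (i + 1)))
    (hstab : ∀ i ≥ rX, ∀ a ∈ A (i + 1), ∃ b ∈ A i, a = x₀ * b)
    -- σ is a homogeneous trace map of degree 0 for Q^h(R_X)/L₀; its existence
    -- expresses that X is locally Gorenstein.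
    (σ : Q →ₗ[K] Q)
    (hσL : ∀ q : Q, σ q ∈ LaurentPart K x₀ (Q := Q))
    (hσlin : ∀ a ∈ LaurentPart K x₀ (Q := Q), ∀ q : Q, σ (a * q) = a * σ q)
    (hσ0 : ∀ m : ℤ, ∀ q ∈ QPiece (Q := Q) A x₀ m, σ q ∈ QPiece (Q := Q) A x₀ m)
    (hσtr : ∀ ψ : Q →ₗ[K] Q, (∀ q, ψ q ∈ LaurentPart K x₀ (Q := Q)) →
        (∀ a ∈ LaurentPart K x₀ (Q := Q), ∀ q, ψ (a * q) = a * ψ q) →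
        ∃ u : Q, ∀ q, ψ q = σ (u * q))
    :
    (∀ q ∈ DedekindDiff (Q := Q) x₀ σ, q ∈ Set.range (algebraMap R Q)) ∧
    (∃ J : Ideal R,
        (∀ f : R, f ∈ J ↔ algebraMap R Q f ∈ DedekindDiff (Q := Q) x₀ σ) ∧
        (∀ f ∈ J, ∀ i : ℕ, (DirectSum.decompose A f i : R) ∈ J)) ∧
    (algebraMap R Q (x₀ ^ (2 * rX)) ∈ DedekindDiff (Q := Q) x₀ σ) ∧
    (∀ i : ℤ, i < 0 → HFdiff (Q := Q) A x₀ σ i = 0) ∧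
    (∀ i : ℤ, (2 * rX : ℤ) ≤ i → HFdiff (Q := Q) A x₀ σ i = D) ∧
    (∀ i j : ℤ, 0 ≤ i → i ≤ j → HFdiff (Q := Q) A x₀ σ i ≤ HFdiff (Q := Q) A x₀ σ j) ∧
    (∀ i : ℤ, i < (rX : ℤ) → ∃ j ≥ i, HFdiff (Q := Q) A x₀ σ j ≠ D) := by
  classical
  obtain ⟨π, hπ1, hπ2, hπ3, hπ4, hnd⟩ :=
    master (Q := Q) A x₀ rX D hx₀ hnzd (hD rX le_rfl) hDpos hstab
  have hnd' : ∀ w : Q, (∀ q, σ (w * q) = 0) → w = 0 := hnd σ hσtr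
  have hφinj : Function.Injective (algebraMap R Q) := hinj (Q := Q) x₀ hnzd
  have hnzdpow : ∀ (e : ℕ) (a : R), x₀ ^ e * a = 0 → a = 0 := by
    intro e
    induction e with
    | zero => intro a h; simpa using h
    | succ e ih =>
        intro a h
        have h2 : x₀ ^ e * (x₀ * a) = 0 := by
          rw [← mul_assoc, mul_comm (x₀ ^ e) x₀, ← pow_succ']
          exact h
        exact hnzd a (ih _ h2)
  -- homogeneous Laurent elements
  have hLhom : ∀ (m : ℤ) (q : Q), q ∈ LaurentPart K x₀ (Q := Q) →
      q ∈ QPiece (Q := Q) A x₀ m →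
      ∃ c : K, q = c • (((uQ x₀ : Qˣ) ^ m : Qˣ) : Q) := by
    intro m q hqL hqm
    obtain ⟨c, hc⟩ := Finsupp.mem_span_range_iff_exists_finsupp.mp
      (L_span (Q := Q) x₀ q hqL)
    have h1 : q = ∑ j ∈ c.support, c j • (((uQ x₀ : Qˣ) ^ j : Qˣ) : Q) := by
      rw [← hc]; rfl
    have h2 : π m q = q := hπ1 m q hqm
    conv_lhs at h2 => rw [h1]
    rw [map_sum] at h2
    have h3 : ∀ j ∈ c.support, π m (c j • (((uQ x₀ : Qˣ) ^ j : Qˣ) : Q))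
        = if m = j then c j • (((uQ x₀ : Qˣ) ^ m : Qˣ) : Q) else 0 := by
      intro j _
      by_cases h : m = j
      · subst h
        rw [if_pos rfl, map_smul, hπ1 m _ (uQ_zpow_QP A x₀ hx₀ m)]
      · rw [if_neg h, map_smul,
          hπ2 m j _ (uQ_zpow_QP A x₀ hx₀ j) h, smul_zero]
    rw [Finset.sum_congr rfl h3, Finset.sum_ite_eq c.support m
      (fun j => c j • (((uQ x₀ : Qˣ) ^ m : Qˣ) : Q))] at h2
    by_cases h : m ∈ c.support
    · rw [if_pos h] at h2
      exact ⟨c m, h2.symm⟩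
    · rw [if_neg h] at h2
      exact ⟨0, by rw [← h2, zero_smul]⟩
  have hσhom : ∀ (m : ℤ) (q : Q), q ∈ QPiece (Q := Q) A x₀ m →
      ∃ c : K, σ q = c • (((uQ x₀ : Qˣ) ^ m : Qˣ) : Q) :=
    fun m q hq => hLhom m (σ q) (hσL q) (hσ0 m q hq)
  -- projections kill PolyPart in negative degrees
  have hPdetect : ∀ (j : ℤ), j < 0 → ∀ p ∈ PolyPart K x₀ (Q := Q), π j p = 0 := by
    intro j hj p hp
    obtain ⟨c, hc⟩ := Finsupp.mem_span_range_iff_exists_finsupp.mp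
      (P_span (Q := Q) x₀ p hp)
    have h1 : p = ∑ nn ∈ c.support, c nn • (((uQ x₀ : Qˣ) ^ (nn:ℤ) : Qˣ) : Q) := by
      rw [← hc]; rfl
    rw [h1, map_sum]
    refine Finset.sum_eq_zero fun nn _ => ?_
    rw [map_smul, hπ2 j (nn:ℤ) _ (uQ_zpow_QP A x₀ hx₀ (nn:ℤ)) (by omega), smul_zero]
  -- 1 ∈ CompMod
  have hone : (1:Q) ∈ CompMod (Q := Q) x₀ σ := by
    intro f
    rw [one_mul]
    have hfd := DirectSum.sum_support_decompose A f
    have : σ (algebraMap R Q f) = ∑ k ∈ DFinsupp.support (DirectSum.decompose A f),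
        σ (algebraMap R Q ((DirectSum.decompose A f) k : R)) := by
      conv_lhs => rw [← hfd]
      rw [map_sum, map_sum]
    rw [this]
    refine Subalgebra.sum_mem _ fun k _ => ?_
    obtain ⟨c, hck⟩ := hσhom (k:ℤ) _ (QP_phi A x₀ (SetLike.coe_mem _))
    rw [hck]
    exact smul_upow_mem_P x₀ (by omega) c
  -- CompMod is graded
  have hgr : ∀ c0 ∈ CompMod (Q := Q) x₀ σ, ∀ m : ℤ,
      π m c0 ∈ CompMod (Q := Q) x₀ σ := by
    intro c0 hc0 m
    have hkey : ∀ (k : ℕ) (g : R), g ∈ A k →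
        σ (π m c0 * algebraMap R Q g) ∈ PolyPart K x₀ (Q := Q) := by
      intro k g hg
      by_cases hmk : 0 ≤ m + k
      · obtain ⟨c, hck⟩ := hσhom (m + k) _
          (QP_mul A x₀ hx₀ (hπ4 m c0) (QP_phi A x₀ hg))
        rw [hck]
        exact smul_upow_mem_P x₀ hmk c
      · -- show it is zero
        obtain ⟨S, hS⟩ := hπ3 c0
        by_cases hmS : m ∈ S
        · have hX : σ (c0 * algebraMap R Q g)
              = ∑ m' ∈ S, σ (π m' c0 * algebraMap R Q g) := by
            conv_lhs => rw [hS]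
            rw [Finset.sum_mul, map_sum]
          have hz : π (m + k) (σ (c0 * algebraMap R Q g))
              = σ (π m c0 * algebraMap R Q g) := by
            rw [hX, map_sum, Finset.sum_eq_single m]
            · exact hπ1 _ _ (hσ0 _ _ (QP_mul A x₀ hx₀ (hπ4 m c0) (QP_phi A x₀ hg)))
            · intro m' _ hne
              exact hπ2 (m + k) (m' + k) _
                (hσ0 _ _ (QP_mul A x₀ hx₀ (hπ4 m' c0) (QP_phi A x₀ hg)))
                (by omega)
            · intro h; exact absurd hmS h
          rw [← hz, hPdetect (m + k) (by omega) _ (hc0 g)]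
          exact Subalgebra.zero_mem _
        · have hz : π m c0 = 0 := by
            have := congrArg (π m) hS
            rw [map_sum] at this
            rw [this, Finset.sum_eq_zero]
            intro m' hm'
            exact hπ2 m m' _ (hπ4 m' c0) (fun h => hmS (h ▸ hm'))
          rw [hz, zero_mul, map_zero]
          exact Subalgebra.zero_mem _
    intro f
    have hfd := DirectSum.sum_support_decompose A f
    have : σ (π m c0 * algebraMap R Q f)
        = ∑ k ∈ DFinsupp.support (DirectSum.decompose A f),
            σ (π m c0 * algebraMap R Q ((DirectSum.decompose A f) k : R)) := by
      conv_lhs => rw [← hfd]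
      rw [map_sum, Finset.mul_sum, map_sum]
    rw [this]
    exact Subalgebra.sum_mem _ fun k _ => hkey k _ (SetLike.coe_mem _)
  -- CompMod vanishes in degrees < -rX
  have hbound : ∀ c0 ∈ CompMod (Q := Q) x₀ σ, ∀ m : ℤ, m < -(rX:ℤ) →
      π m c0 = 0 := by
    intro c0 hc0 m hm
    apply hnd'
    intro q
    obtain ⟨S, hSq⟩ := hπ3 q
    have : π m c0 * q = ∑ m' ∈ S, π m c0 * π m' q := by
      conv_lhs => rw [hSq]
      rw [Finset.mul_sum]
    rw [this, map_sum]
    refine Finset.sum_eq_zero fun m' _ => ?_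
    have h4 := hπ4 m' q
    rw [QP_eq_range (Q := Q) A x₀ rX hx₀ hstab] at h4
    obtain ⟨a, ha⟩ := h4
    rw [← ha, iot_apply]
    rw [show π m c0 * ((((uQ x₀ : Qˣ) ^ (m' - rX) : Qˣ) : Q) * algebraMap R Q (a:R))
        = (((uQ x₀ : Qˣ) ^ (m' - rX) : Qˣ) : Q) * (π m c0 * algebraMap R Q (a:R)) from by
        ring]
    rw [hσlin _ (uQ_zpow_mem_L x₀ (m' - rX)) _]
    have hX : σ (π m c0 * algebraMap R Q (a:R)) = 0 := by
      have h5 : σ (π m c0 * algebraMap R Q (a:R)) ∈ QPiece (Q := Q) A x₀ (m + rX) :=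
        hσ0 _ _ (QP_mul A x₀ hx₀ (hπ4 m c0) (QP_phi A x₀ a.2))
      rw [← hπ1 _ _ h5]
      exact hPdetect (m + rX) (by omega) _ (hgr c0 hc0 m (a:R))
    rw [hX, mul_zero]
  -- high QPieces are in the image of R
  have hQPbig : ∀ (d : ℤ), (rX:ℤ) ≤ d → ∀ q ∈ QPiece (Q := Q) A x₀ d,
      q ∈ Set.range (algebraMap R Q) := by
    intro d hd q hq
    rw [QP_eq_range (Q := Q) A x₀ rX hx₀ hstab] at hq
    obtain ⟨a, ha⟩ := hq
    refine ⟨x₀ ^ (d - rX).toNat * (a:R), ?_⟩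
    rw [map_mul, ← uQ_zpow_val' (Q := Q) x₀ (by omega : (0:ℤ) ≤ d - rX), ← ha, iot_apply]
  have hrange_sum : ∀ {ι : Type} (S : Finset ι) (v : ι → Q),
      (∀ m ∈ S, v m ∈ Set.range (algebraMap R Q)) →
      (∑ m ∈ S, v m) ∈ Set.range (algebraMap R Q) := by
    intro ι S v hv
    have : (∑ m ∈ S, v m) ∈ (algebraMap R Q).range :=
      Subring.sum_mem _ (fun m hm => hv m hm)
    exact this
  -- elements of high degree are in the different
  have hδbig : ∀ (i : ℕ), 2*rX ≤ i → ∀ g ∈ A i,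
      algebraMap R Q g ∈ DedekindDiff (Q := Q) x₀ σ := by
    intro i hi g hg c0 hc0
    obtain ⟨S, hS⟩ := hπ3 c0
    have : algebraMap R Q g * c0 = ∑ m ∈ S, algebraMap R Q g * π m c0 := by
      conv_lhs => rw [hS]
      rw [Finset.mul_sum]
    rw [this]
    refine hrange_sum S _ fun m _ => ?_
    by_cases hm : -(rX:ℤ) ≤ m
    · exact hQPbig ((i:ℤ) + m) (by omega) _
        (QP_mul A x₀ hx₀ (QP_phi A x₀ hg) (hπ4 m c0))
    · rw [hbound c0 hc0 m (by omega), mul_zero]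
      exact ⟨0, map_zero _⟩
  -- claim 1 : the different is contained in R
  have hδR : ∀ q ∈ DedekindDiff (Q := Q) x₀ σ, q ∈ Set.range (algebraMap R Q) := by
    intro q hq
    have := hq 1 hone
    rwa [mul_one] at this
  -- the ideal J
  set J : Ideal R :=
    { carrier := {f | algebraMap R Q f ∈ DedekindDiff (Q := Q) x₀ σ},
      add_mem' := by
        intro f g hf hg c0 hc0
        rw [map_add, add_mul]
        obtain ⟨a, ha⟩ := hf c0 hc0
        obtain ⟨b, hb⟩ := hg c0 hc0
        exact ⟨a + b, by rw [map_add, ha, hb]⟩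
      zero_mem' := by
        intro c0 hc0
        rw [map_zero, zero_mul]
        exact ⟨0, map_zero _⟩
      smul_mem' := by
        intro r f hf c0 hc0
        rw [smul_eq_mul, map_mul, mul_assoc]
        obtain ⟨a, ha⟩ := hf c0 hc0
        exact ⟨r * a, by rw [map_mul, ha]⟩ } with hJdef
  have hJmem : ∀ f : R, f ∈ J ↔ algebraMap R Q f ∈ DedekindDiff (Q := Q) x₀ σ :=
    fun f => Iff.rfl
  -- J is homogeneous
  have hJhom : ∀ f ∈ J, ∀ i : ℕ, (DirectSum.decompose A f i : R) ∈ J := by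
    intro f hf i
    rw [hJmem]
    intro c0 hc0
    obtain ⟨S, hS⟩ := hπ3 c0
    have hsplit : algebraMap R Q (DirectSum.decompose A f i : R) * c0
        = ∑ m ∈ S, algebraMap R Q (DirectSum.decompose A f i : R) * π m c0 := by
      conv_lhs => rw [hS]
      rw [Finset.mul_sum]
    rw [hsplit]
    refine hrange_sum S _ fun m _ => ?_
    -- fix a homogeneous component of c0
    have hcm : π m c0 ∈ CompMod (Q := Q) x₀ σ := hgr c0 hc0 m
    obtain ⟨G, hG⟩ := hf (π m c0) hcm
    have hfd := DirectSum.sum_support_decompose A f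
    have hterm : π ((i:ℤ) + m) (algebraMap R Q f * π m c0)
        = algebraMap R Q (DirectSum.decompose A f i : R) * π m c0 := by
      conv_lhs => rw [← hfd]
      rw [map_sum, Finset.sum_mul, map_sum]
      rw [Finset.sum_eq_single i]
      · exact hπ1 _ _ (QP_mul A x₀ hx₀ (QP_phi A x₀ (SetLike.coe_mem _)) (hπ4 m c0))
      · intro k _ hki
        exact hπ2 ((i:ℤ) + m) ((k:ℤ) + m) _
          (QP_mul A x₀ hx₀ (QP_phi A x₀ (SetLike.coe_mem _)) (hπ4 m c0))
          (by
            intro h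
            exact hki (by omega))
      · intro hi'
        rw [DFinsupp.notMem_support_iff.mp hi']
        rw [ZeroMemClass.coe_zero, map_zero, zero_mul, map_zero]
    rw [← hterm, ← hG]
    have hGd := DirectSum.sum_support_decompose A G
    have hGdec : algebraMap R Q G
        = ∑ k ∈ DFinsupp.support (DirectSum.decompose A G),
            algebraMap R Q ((DirectSum.decompose A G) k : R) := by
      conv_lhs => rw [← hGd]
      rw [map_sum]
    rw [hGdec, map_sum]
    refine hrange_sum _ _ fun k _ => ?_
    by_cases hk : (k:ℤ) = (i:ℤ) + m
    · rw [hπ1 _ _ (by rw [← hk]; exact QP_phi A x₀ (SetLike.coe_mem _))]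
      exact ⟨_, rfl⟩
    · rw [hπ2 ((i:ℤ) + m) (k:ℤ) _ (QP_phi A x₀ (SetLike.coe_mem _)) (Ne.symm hk)]
      exact ⟨0, map_zero _⟩
  -- claim 3
  have hx2r : algebraMap R Q (x₀ ^ (2 * rX)) ∈ DedekindDiff (Q := Q) x₀ σ :=
    hδbig (2*rX) le_rfl _ (xpow_mem A x₀ hx₀ (2*rX))
  -- degree pieces of the different
  have hpiece_neg : ∀ i : ℤ, i < 0 →
      ∀ q ∈ DedekindDiff (Q := Q) x₀ σ ∩ QPiece (Q := Q) A x₀ i, q = 0 := by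
    intro i hi q hq
    obtain ⟨g, hg⟩ := hδR q hq.1
    have h1 : π i q = q := hπ1 i q hq.2
    have hfd := DirectSum.sum_support_decompose A g
    have h2 : algebraMap R Q g = ∑ k ∈ DFinsupp.support (DirectSum.decompose A g),
        algebraMap R Q ((DirectSum.decompose A g) k : R) := by
      conv_lhs => rw [← hfd]
      rw [map_sum]
    rw [← h1, ← hg, h2, map_sum]
    refine Finset.sum_eq_zero fun k _ => ?_
    exact hπ2 i (k:ℤ) _ (QP_phi A x₀ (SetLike.coe_mem _)) (by omega)
  set Ji : ℕ → Submodule K R :=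
    fun i => (A i) ⊓ (Submodule.restrictScalars K J) with hJi
  have hpiece : ∀ i : ℕ, DedekindDiff (Q := Q) x₀ σ ∩ QPiece (Q := Q) A x₀ (i:ℤ)
      = (algebraMap R Q) '' (Ji i : Set R) := by
    intro i
    ext q
    constructor
    · rintro ⟨hq1, hq2⟩
      obtain ⟨g, hg⟩ := hδR q hq1
      have h1 : π (i:ℤ) q = q := hπ1 _ q hq2
      have hfd := DirectSum.sum_support_decompose A g
      have h2 : algebraMap R Q g = ∑ k ∈ DFinsupp.support (DirectSum.decompose A g),
          algebraMap R Q ((DirectSum.decompose A g) k : R) := by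
        conv_lhs => rw [← hfd]
        rw [map_sum]
      have h3 : q = ∑ k ∈ DFinsupp.support (DirectSum.decompose A g),
          π (i:ℤ) (algebraMap R Q ((DirectSum.decompose A g) k : R)) := by
        conv_lhs => rw [← h1]
        rw [← hg, h2, map_sum]
      rw [Finset.sum_eq_single i
        (fun k _ hk => hπ2 (i:ℤ) (k:ℤ) _ (QP_phi A x₀ (SetLike.coe_mem _)) (by omega))
        (fun hni => by
          rw [DFinsupp.notMem_support_iff.mp hni, ZeroMemClass.coe_zero,
            map_zero, map_zero])] at h3
      rw [hπ1 (i:ℤ) _ (QP_phi A x₀ (SetLike.coe_mem _))] at h3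
      refine ⟨(DirectSum.decompose A g i : R), Submodule.mem_inf.mpr ⟨SetLike.coe_mem _, ?_⟩,
        h3.symm⟩
      rw [Submodule.restrictScalars_mem]
      rw [hJmem]
      rw [← h3]
      exact hq1
    · rintro ⟨a, ha, rfl⟩
      obtain ⟨ha1, ha2⟩ := Submodule.mem_inf.mp ha
      rw [Submodule.restrictScalars_mem] at ha2
      exact ⟨(hJmem a).mp ha2, QP_phi A x₀ ha1⟩
  set φl : R →ₗ[K] Q := (Algebra.linearMap R Q).restrictScalars K with hφl
  have hHF : ∀ i : ℕ, HFdiff (Q := Q) A x₀ σ (i:ℤ) = Module.finrank K (Ji i) := by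
    intro i
    have hsp : Submodule.span K ((algebraMap R Q) '' (Ji i : Set R))
        = Submodule.map φl (Ji i) := by
      apply le_antisymm
      · rw [Submodule.span_le]
        rintro q ⟨a, ha, rfl⟩
        exact Submodule.mem_map.mpr ⟨a, ha, rfl⟩
      · intro q hq
        obtain ⟨a, ha, rfl⟩ := Submodule.mem_map.mp hq
        exact Submodule.subset_span ⟨a, ha, rfl⟩
    simp only [HFdiff]
    rw [hpiece i, hsp]
    exact (LinearEquiv.finrank_eq (Submodule.equivMapOfInjective φl hφinj (Ji i))).symm
  have claim4 : ∀ i : ℤ, i < 0 → HFdiff (Q := Q) A x₀ σ i = 0 := by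
    intro i hi
    simp only [HFdiff]
    have hb : Submodule.span K
        (DedekindDiff (Q := Q) x₀ σ ∩ QPiece (Q := Q) A x₀ i) = ⊥ := by
      rw [Submodule.span_eq_bot]
      exact fun x hx => hpiece_neg i hi x hx
    rw [hb, finrank_bot]
  have hJfull : ∀ i : ℕ, 2*rX ≤ i → Ji i = A i := by
    intro i hi
    refine inf_eq_left.mpr ?_
    intro a ha
    rw [Submodule.restrictScalars_mem, hJmem]
    exact hδbig i hi a ha
  have claim5 : ∀ i : ℤ, (2 * rX : ℤ) ≤ i → HFdiff (Q := Q) A x₀ σ i = D := by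
    intro i hi
    have hieq : ((i.toNat : ℕ) : ℤ) = i := Int.toNat_of_nonneg (by omega)
    rw [← hieq, hHF, hJfull _ (by omega), hD _ (by omega)]
  have hJmono : ∀ (a b : ℕ), a ≤ b →
      Module.finrank K (Ji a) ≤ Module.finrank K (Ji b) := by
    intro a b hab
    haveI : FiniteDimensional K (Ji b) :=
      Submodule.finiteDimensional_of_le (inf_le_left : Ji b ≤ A b)
    set e := b - a with he
    have heb : e + a = b := by omega
    set ml : R →ₗ[K] R := LinearMap.mulLeft K (x₀ ^ e) with hml
    have hmaps : ∀ x ∈ Ji a, ml x ∈ Ji b := by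
      intro x hx
      obtain ⟨hx1, hx2⟩ := Submodule.mem_inf.mp hx
      refine Submodule.mem_inf.mpr ⟨?_, ?_⟩
      · have h5 := SetLike.mul_mem_graded (xpow_mem A x₀ hx₀ e) hx1
        rwa [heb] at h5
      · rw [Submodule.restrictScalars_mem] at hx2 ⊢
        exact J.mul_mem_left _ hx2
    have hinjml : Function.Injective (ml.restrict hmaps) := by
      intro x y hxy
      have h6 := congrArg Subtype.val hxy
      have h7 : x₀ ^ e * (x : R) = x₀ ^ e * (y : R) := h6
      apply Subtype.ext
      have h0 : x₀ ^ e * ((x:R) - (y:R)) = 0 := by rw [mul_sub, h7, sub_self]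
      have h8 := hnzdpow e _ h0
      exact sub_eq_zero.mp h8
    exact LinearMap.finrank_le_finrank_of_injective hinjml
  have claim6 : ∀ i j : ℤ, 0 ≤ i → i ≤ j →
      HFdiff (Q := Q) A x₀ σ i ≤ HFdiff (Q := Q) A x₀ σ j := by
    intro i j hi hij
    have h1 : ((i.toNat : ℕ) : ℤ) = i := by omega
    have h2 : ((j.toNat : ℕ) : ℤ) = j := by omega
    rw [← h1, ← h2, hHF, hHF]
    exact hJmono _ _ (by omega)
  have claim7 : ∀ i : ℤ, i < (rX:ℤ) → ∃ j ≥ i, HFdiff (Q := Q) A x₀ σ j ≠ D := by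
    intro i hi
    refine ⟨i, le_rfl, ?_⟩
    by_cases h0 : i < 0
    · rw [claim4 i h0]
      omega
    · have h1 : ((i.toNat : ℕ) : ℤ) = i := by omega
      rw [← h1, hHF]
      have hle : Module.finrank K (Ji i.toNat) ≤ Module.finrank K (A i.toNat) :=
        Submodule.finrank_mono (inf_le_left : Ji i.toNat ≤ A i.toNat)
      have h9 := hstrict i.toNat (by omega)
      omega
  exact ⟨hδR, ⟨J, hJmem, hJhom⟩, hx2r, claim4, claim5, claim6, claim7⟩
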